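/- Consider the two-dimensional control system ẏ¹ = (y¹)² + y¹y², ẏ² = (y¹)² − (y²)² + y¹y² + u on the region y¹ < 0. Under the change of coordinates x̃¹ = y¹, x̃² = (y¹)² + y¹y², the system becomes the mechanical control system ẋ̃¹ = x̃², ẋ̃² = 4x̃¹x̃² − (x̃¹)³ + x̃¹u. -/

import Mathlib

/-- consider the control system
`ẏ¹ = (y¹)² + y¹y²`, `ẏ² = (y¹)² − (y²)² + y¹y² + u` on the region `y¹ < 0`.
Under the change of coordinates `x̃¹ = y¹`, `x̃² = (y¹)² + y¹y²`, every trajectory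
satisfies the mechanical control system
`ẋ̃¹ = x̃²`, `ẋ̃² = 4x̃¹x̃² − (x̃¹)³ + x̃¹u`. -/
theorem stmt_14 (y1 y2 u : ℝ → ℝ)
    (hneg : ∀ t, y1 t < 0)
    (hy1 : ∀ t, HasDerivAt y1 ((y1 t) ^ 2 + y1 t * y2 t) t)
    (hy2 : ∀ t, HasDerivAt y2 ((y1 t) ^ 2 - (y2 t) ^ 2 + y1 t * y2 t + u t) t) :
    ∀ t, HasDerivAt (fun s => y1 s) (((y1 t) ^ 2 + y1 t * y2 t)) t ∧
      HasDerivAt (fun s => (y1 s) ^ 2 + y1 s * y2 s)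
        (4 * y1 t * ((y1 t) ^ 2 + y1 t * y2 t) - (y1 t) ^ 3 + y1 t * u t) t := by
  intro t
  refine ⟨hy1 t, ?_⟩
  have h : HasDerivAt (fun s => y1 s ^ 2 + y1 s * y2 s) _ t := ((hy1 t).pow 2).add ((hy1 t).mul (hy2 t))
  convert h using 1
  ring
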